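/- Let (a_n), (b_n), (c_n) be sequences of complex numbers whose exponential generating functions satisfy c̃(t) = ã(t) + b̃(t) + (e^t − 1)·ã(t)·b̃(t) in ℂ[[t]]. If the ordinary generating functions a(t) = Σ a_n tⁿ and b(t) = Σ b_n tⁿ are both rational, then the ordinary generating function c(t) = Σ c_n tⁿ is also rational. -/

import Mathlib

/-- A power series is rational if `q * a = p` for polynomials `p q` with `q 0 ≠ 0`. -/
def IsRationalPS (a : PowerSeries ℂ) : Prop :=
  ∃ p q : Polynomial ℂ, q.coeff 0 ≠ 0 ∧
    (q : PowerSeries ℂ) * a = (p : PowerSeries ℂ)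

/-- A power series is algebraic over ℂ(t) if it is annihilated by a nonzero
polynomial `F(t,y) ∈ ℂ[t][y]`. -/
def IsAlgebraicPS (b : PowerSeries ℂ) : Prop :=
  ∃ F : Polynomial (Polynomial ℂ), F ≠ 0 ∧
    Polynomial.eval₂ Polynomial.coeToPowerSeries.ringHom b F = 0

/-- The exponential generating function of a sequence:  `∑ aₙ tⁿ/n!`. -/
noncomputable def egf (a : ℕ → ℂ) : PowerSeries ℂ :=
  PowerSeries.mk fun n => a n / n.factorial

/-- The formal exponential series `e^t = ∑ tⁿ/n!`. -/
noncomputable def expPS : PowerSeries ℂ :=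
  PowerSeries.mk fun n => 1 / n.factorial

open PowerSeries Finset

/-- binomial convolution of sequences -/
noncomputable def binconv (a b : ℕ → ℂ) : ℕ → ℂ :=
  fun n => ∑ k ∈ Finset.range (n+1), (n.choose k : ℂ) * a k * b (n-k)

/-- a sequence is an entry of powers of a f.d. endomorphism -/
def ExactRep (a : ℕ → ℂ) : Prop :=
  ∃ (V : Type) (_ : AddCommGroup V) (_ : Module ℂ V) (_ : Module.Finite ℂ V)
    (T : V →ₗ[ℂ] V) (φ : V →ₗ[ℂ] ℂ) (v : V), ∀ n, a n = φ ((T ^ n) v)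

noncomputable def shiftL : PowerSeries ℂ →ₗ[ℂ] PowerSeries ℂ where
  toFun f := PowerSeries.mk fun n => PowerSeries.coeff (n + 1) f
  map_add' f g := by ext n; simp
  map_smul' r f := by ext n; simp

lemma coeff_shiftL_pow (n : ℕ) (f : PowerSeries ℂ) :
    PowerSeries.coeff 0 ((shiftL ^ n) f) = PowerSeries.coeff n f := by
  induction n generalizing f with
  | zero => simp
  | succ n ih =>
    rw [pow_succ, Module.End.mul_apply, ih]
    simp [shiftL]

lemma coeff_mul_shiftL (q : Polynomial ℂ) (f : PowerSeries ℂ) (n : ℕ) :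
    PowerSeries.coeff n ((q : PowerSeries ℂ) * shiftL f)
      = PowerSeries.coeff (n + 1) ((q : PowerSeries ℂ) * f)
        - q.coeff (n + 1) * PowerSeries.coeff 0 f := by
  rw [PowerSeries.coeff_mul, PowerSeries.coeff_mul,
    Finset.Nat.sum_antidiagonal_eq_sum_range_succ_mk,
    Finset.Nat.sum_antidiagonal_eq_sum_range_succ_mk, eq_sub_iff_add_eq]
  conv_rhs => rw [Finset.sum_range_succ]
  simp only [Polynomial.coeff_coe, Nat.sub_self]
  congr 1
  refine Finset.sum_congr rfl fun i hi => ?_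
  simp only [Finset.mem_range, Nat.lt_succ_iff] at hi
  simp only [shiftL, LinearMap.coe_mk, AddHom.coe_mk, PowerSeries.coeff_mk]
  have : n - i + 1 = n + 1 - i := by omega
  rw [this]

lemma exact_of_rational {a : ℕ → ℂ} (ha : IsRationalPS (PowerSeries.mk a)) : ExactRep a := by
  obtain ⟨p, q, hq0, hpq⟩ := ha
  set d := max q.natDegree p.natDegree + 1 with hd
  set W : Submodule ℂ (PowerSeries ℂ) :=
    { carrier := {f | ∀ n, d ≤ n → PowerSeries.coeff n ((q : PowerSeries ℂ) * f) = 0}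
      add_mem' := fun hf hg n hn => by
        rw [mul_add, map_add, hf n hn, hg n hn, add_zero]
      zero_mem' := fun n hn => by simp
      smul_mem' := fun r f hf n hn => by
        rw [mul_smul_comm, map_smul, hf n hn, smul_zero] } with hW
  have hmem : ∀ f : PowerSeries ℂ, f ∈ W ↔
      (∀ n, d ≤ n → PowerSeries.coeff n ((q : PowerSeries ℂ) * f) = 0) := fun f => Iff.rfl
  have haW : PowerSeries.mk a ∈ W := by
    rw [hmem, hpq]
    intro n hn
    rw [Polynomial.coeff_coe]
    exact Polynomial.coeff_eq_zero_of_natDegree_lt (by omega)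
  have hinv : ∀ f ∈ W, shiftL f ∈ W := by
    intro f hf
    rw [hmem] at hf ⊢
    intro n hn
    rw [coeff_mul_shiftL, hf (n + 1) (by omega),
      Polynomial.coeff_eq_zero_of_natDegree_lt (by omega), zero_mul, sub_zero]
  -- finite dimensionality
  let π : W →ₗ[ℂ] (Fin d → ℂ) :=
    LinearMap.pi fun i => (PowerSeries.coeff (i : ℕ)) ∘ₗ W.subtype
  have hπ : Function.Injective π := by
    rw [← LinearMap.ker_eq_bot, LinearMap.ker_eq_bot']
    intro f hf
    have hcoeffs : ∀ i : Fin d, PowerSeries.coeff (i : ℕ) f.val = 0 := by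
      intro i
      exact congrFun hf i
    have hall : ∀ n, PowerSeries.coeff n f.val = 0 := by
      intro n
      induction n using Nat.strong_induction_on with
      | _ n ih =>
        by_cases hn : n < d
        · exact hcoeffs ⟨n, hn⟩
        · push_neg at hn
          have h0 := (hmem f.val).mp f.2 n hn
          rw [PowerSeries.coeff_mul, Finset.Nat.sum_antidiagonal_eq_sum_range_succ_mk] at h0
          rw [Finset.sum_eq_single 0] at h0
          · simp only [Polynomial.coeff_coe, Nat.sub_zero] at h0
            have hq0' : q.coeff 0 ≠ 0 := hq0
            exact (mul_eq_zero.mp h0).resolve_left hq0'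
          · intro i hi hine
            have : PowerSeries.coeff (n - i) f.val = 0 := ih (n - i) (by omega)
            rw [this, mul_zero]
          · intro h
            exact absurd (Finset.mem_range.mpr (by omega)) h
    apply Subtype.ext
    exact PowerSeries.ext hall
  haveI : Module.Finite ℂ W := FiniteDimensional.of_injective π hπ
  let T : W →ₗ[ℂ] W := shiftL.restrict hinv
  have hTpow : ∀ (n : ℕ) (x : W), (((T ^ n) x : W) : PowerSeries ℂ) = (shiftL ^ n) (x : PowerSeries ℂ) := by
    intro n
    induction n with
    | zero => intro x; simp
    | succ n ih =>
      intro x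
      rw [pow_succ, pow_succ, Module.End.mul_apply, Module.End.mul_apply, ih]
      rfl
  refine ⟨W, inferInstance, inferInstance, inferInstance, T,
    (PowerSeries.coeff 0) ∘ₗ W.subtype, ⟨PowerSeries.mk a, haW⟩, ?_⟩
  intro n
  rw [LinearMap.comp_apply, Submodule.subtype_apply, hTpow, coeff_shiftL_pow,
    PowerSeries.coeff_mk]


lemma poly_of_bounded (f : PowerSeries ℂ) (E : ℕ)
    (hf : ∀ n, E ≤ n → PowerSeries.coeff n f = 0) :
    ∃ p : Polynomial ℂ, (p : PowerSeries ℂ) = f := by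
  refine ⟨f.trunc E, ?_⟩
  ext n
  rw [Polynomial.coeff_coe, PowerSeries.coeff_trunc]
  split
  · rfl
  · exact (hf n (le_of_not_gt (by assumption))).symm

lemma rational_of_exact {a : ℕ → ℂ} (ha : ExactRep a) : IsRationalPS (PowerSeries.mk a) := by
  obtain ⟨V, _, _, _, T, φ, v, hav⟩ := ha
  set χ := T.charpoly with hχ
  set D := χ.natDegree with hD
  have hmon : χ.Monic := T.charpoly_monic
  have hrec : ∀ m, D ≤ m → ∑ k ∈ Finset.range (D + 1), χ.coeff k * a (m - D + k) = 0 := by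
    intro m hm
    have h0 : Polynomial.aeval T χ = 0 := T.aeval_self_charpoly
    have h1 : (T ^ (m - D)) ((Polynomial.aeval T χ) v) = 0 := by rw [h0]; simp
    rw [Polynomial.aeval_eq_sum_range, LinearMap.sum_apply, map_sum] at h1
    have h2 : ∀ k ∈ Finset.range (D + 1),
        (T ^ (m - D)) ((χ.coeff k • T ^ k) v) = χ.coeff k • (T ^ (m - D + k)) v := by
      intro k _
      rw [LinearMap.smul_apply, map_smul, pow_add, Module.End.mul_apply]
    rw [Finset.sum_congr rfl h2] at h1
    have h3 := congrArg φ h1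
    rw [map_sum, map_zero] at h3
    simpa [hav, smul_eq_mul] using h3
  set q := χ.reverse with hq
  have hq0 : q.coeff 0 ≠ 0 := by
    rw [hq, Polynomial.coeff_zero_reverse, hmon.leadingCoeff]
    exact one_ne_zero
  have key : ∀ m, D ≤ m →
      PowerSeries.coeff m ((q : PowerSeries ℂ) * PowerSeries.mk a) = 0 := by
    intro m hm
    rw [PowerSeries.coeff_mul, Finset.Nat.sum_antidiagonal_eq_sum_range_succ_mk]
    simp only [Polynomial.coeff_coe, PowerSeries.coeff_mk]
    have hsub : ∑ i ∈ Finset.range (m + 1), q.coeff i * a (m - i)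
        = ∑ i ∈ Finset.range (D + 1), q.coeff i * a (m - i) := by
      refine (Finset.sum_subset (by intro i hi; simp at *; omega) ?_).symm
      intro i _ hi
      simp only [Finset.mem_range, Nat.lt_succ_iff, not_le] at hi
      have : q.coeff i = 0 := Polynomial.coeff_eq_zero_of_natDegree_lt
        (lt_of_le_of_lt χ.reverse_natDegree_le hi)
      rw [this, zero_mul]
    rw [hsub]
    have hterm : ∀ i ∈ Finset.range (D + 1),
        q.coeff i * a (m - i) = χ.coeff (D - i) * a (m - D + (D - i)) := by
      intro i hi
      simp only [Finset.mem_range, Nat.lt_succ_iff] at hi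
      rw [hq, Polynomial.coeff_reverse, Polynomial.revAt_le (by omega), ← hD]
      congr 2
      omega
    rw [Finset.sum_congr rfl hterm]
    have := Finset.sum_range_reflect (fun k => χ.coeff k * a (m - D + k)) (D + 1)
    simp only [Nat.add_sub_cancel] at this
    rw [this]
    exact hrec m hm
  obtain ⟨p, hp⟩ := poly_of_bounded _ D (fun n hn => key n hn)
  exact ⟨p, q, hq0, hp.symm⟩


lemma exact_binconv {a b : ℕ → ℂ} (ha : ExactRep a) (hb : ExactRep b) :
    ExactRep (binconv a b) := by
  obtain ⟨V, _, _, _, T, φ, v, hav⟩ := ha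
  obtain ⟨W, _, _, _, S, ψ, w, hbw⟩ := hb
  refine ⟨TensorProduct ℂ V W, inferInstance, inferInstance, inferInstance,
    TensorProduct.map T LinearMap.id + TensorProduct.map LinearMap.id S,
    (TensorProduct.lid ℂ ℂ).toLinearMap ∘ₗ TensorProduct.map φ ψ,
    v ⊗ₜ w, ?_⟩
  intro n
  have hcomm : Commute (TensorProduct.map T (LinearMap.id : W →ₗ[ℂ] W))
      (TensorProduct.map (LinearMap.id : V →ₗ[ℂ] V) S) := by
    show _ * _ = _ * _
    rw [Module.End.mul_eq_comp, Module.End.mul_eq_comp, ← TensorProduct.map_comp,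
      ← TensorProduct.map_comp]
    simp
  have hpow1 : ∀ k, (TensorProduct.map T (LinearMap.id : W →ₗ[ℂ] W)) ^ k
      = TensorProduct.map (T ^ k) LinearMap.id := by
    intro k; induction k with
    | zero => simp [pow_zero, Module.End.one_eq_id, TensorProduct.map_id]
    | succ k ih =>
        rw [pow_succ, ih, pow_succ, Module.End.mul_eq_comp, Module.End.mul_eq_comp,
          ← TensorProduct.map_comp, LinearMap.id_comp]
  have hpow2 : ∀ k, (TensorProduct.map (LinearMap.id : V →ₗ[ℂ] V) S) ^ k
      = TensorProduct.map LinearMap.id (S ^ k) := by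
    intro k; induction k with
    | zero => simp [pow_zero, Module.End.one_eq_id, TensorProduct.map_id]
    | succ k ih =>
        rw [pow_succ, ih, pow_succ, Module.End.mul_eq_comp, Module.End.mul_eq_comp,
          ← TensorProduct.map_comp, LinearMap.id_comp]
  rw [hcomm.add_pow]
  rw [LinearMap.sum_apply, map_sum]
  rw [binconv]
  refine Finset.sum_congr rfl fun k hk => ?_
  rw [hpow1, hpow2, Module.End.mul_apply, Module.End.mul_apply, Module.End.natCast_apply,
    map_nsmul, map_nsmul, map_nsmul, TensorProduct.map_tmul, TensorProduct.map_tmul]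
  simp only [LinearMap.id_coe, id_eq, LinearMap.coe_comp, Function.comp_apply,
    LinearEquiv.coe_coe, TensorProduct.map_tmul, TensorProduct.lid_tmul, smul_eq_mul]
  rw [hav, hbw]
  ring


lemma rational_binconv {a b : ℕ → ℂ} (ha : IsRationalPS (PowerSeries.mk a))
    (hb : IsRationalPS (PowerSeries.mk b)) : IsRationalPS (PowerSeries.mk (binconv a b)) :=
  rational_of_exact (exact_binconv (exact_of_rational ha) (exact_of_rational hb))

lemma rational_add {f g : PowerSeries ℂ} (hf : IsRationalPS f) (hg : IsRationalPS g) :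
    IsRationalPS (f + g) := by
  obtain ⟨p, q, hq, hpq⟩ := hf
  obtain ⟨p', q', hq', hpq'⟩ := hg
  refine ⟨q' * p + q * p', q * q', by simp [Polynomial.mul_coeff_zero, mul_ne_zero hq hq'], ?_⟩
  push_cast
  rw [show ((q : PowerSeries ℂ) * q' * (f + g)) = (q' : PowerSeries ℂ) * ((q : PowerSeries ℂ) * f)
    + (q : PowerSeries ℂ) * ((q' : PowerSeries ℂ) * g) from by ring, hpq, hpq']

lemma rational_neg {f : PowerSeries ℂ} (hf : IsRationalPS f) : IsRationalPS (-f) := by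
  obtain ⟨p, q, hq, hpq⟩ := hf
  exact ⟨-p, q, hq, by rw [mul_neg, hpq]; push_cast; ring⟩

lemma rational_one_seq : IsRationalPS (PowerSeries.mk fun _ => (1 : ℂ)) := by
  refine ⟨1, 1 - Polynomial.X, by simp, ?_⟩
  ext n
  push_cast
  rw [sub_mul, one_mul]
  cases n with
  | zero => simp
  | succ n => simp [PowerSeries.coeff_succ_X_mul, PowerSeries.coeff_one]

lemma egf_mul (a b : ℕ → ℂ) : egf a * egf b = egf (binconv a b) := by
  ext n
  rw [PowerSeries.coeff_mul]
  simp only [egf, PowerSeries.coeff_mk, binconv]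
  rw [Finset.Nat.sum_antidiagonal_eq_sum_range_succ_mk, Finset.sum_div]
  refine Finset.sum_congr rfl fun k hk => ?_
  have hkn : k ≤ n := by simpa [Nat.lt_succ_iff] using hk
  rw [Nat.cast_choose ℂ hkn]
  have h1 : (k.factorial : ℂ) ≠ 0 := Nat.cast_ne_zero.2 k.factorial_ne_zero
  have h2 : (((n-k).factorial : ℂ)) ≠ 0 := Nat.cast_ne_zero.2 (n-k).factorial_ne_zero
  have h3 : ((n.factorial : ℂ)) ≠ 0 := Nat.cast_ne_zero.2 n.factorial_ne_zero
  field_simp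

/-- If `c̃ = ã + b̃ + (eᵗ - 1)·ã·b̃` and the ordinary generating functions of `a` and
`b` are rational, then the ordinary generating function of `c` is rational. -/
theorem isRationalPS_of_egf_relation (a b c : ℕ → ℂ)
    (h : egf c = egf a + egf b + (expPS - 1) * egf a * egf b)
    (ha : IsRationalPS (PowerSeries.mk a)) (hb : IsRationalPS (PowerSeries.mk b)) :
    IsRationalPS (PowerSeries.mk c) := by
  set X := binconv (fun _ => (1:ℂ)) (binconv a b) with hX
  set Y := binconv a b with hY
  have hexp : expPS = egf (fun _ => (1:ℂ)) := by simp [expPS, egf]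
  have key : (expPS - 1) * egf a * egf b = egf X - egf Y := by
    calc (expPS - 1) * egf a * egf b
        = egf (fun _ => (1:ℂ)) * (egf a * egf b) - egf a * egf b := by rw [hexp]; ring
      _ = egf X - egf Y := by rw [egf_mul a b, egf_mul]
  rw [key] at h
  have hc : ∀ n, c n = a n + b n + (X n - Y n) := by
    intro n
    have h3 : ((n.factorial : ℂ)) ≠ 0 := Nat.cast_ne_zero.2 n.factorial_ne_zero
    have := congrArg (PowerSeries.coeff n) h
    simp only [map_add, map_sub, egf, PowerSeries.coeff_mk] at this
    field_simp at this
    exact this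
  have hmk : PowerSeries.mk c = PowerSeries.mk a + PowerSeries.mk b +
      (PowerSeries.mk X + -(PowerSeries.mk Y)) := by
    ext n
    simp only [map_add, map_neg, PowerSeries.coeff_mk, hc n]
    ring
  rw [hmk]
  exact rational_add (rational_add ha hb)
    (rational_add (rational_binconv rational_one_seq (rational_binconv ha hb))
      (rational_neg (rational_binconv ha hb)))
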